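/- Tight upper bound on postselected swap fidelity: for ρ₁, ρ₂ ∈ S_{p,F} (two-qubit states of the form p|Ψ₀₀⟩⟨Ψ₀₀| + (1−p)σ_k with fidelity F), the postselected fidelity after Bell-state measurement outcome 00 satisfies F'₀₀(ρ₁⊗ρ₂) ≤ 1 − 2p(1−F). More generally, if ρ_k ∈ S_{p_k,F_k}, then F'₀₀ ≤ 1 − p₁(1−F₂) − p₂(1−F₁). -/

import Mathlib

open Matrix Kronecker BigOperators ComplexOrder

noncomputable section

/-- Pauli X matrix. -/
def PX : Matrix (Fin 2) (Fin 2) ℂ := !![0, 1; 1, 0]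

/-- Pauli Y matrix. -/
def PY : Matrix (Fin 2) (Fin 2) ℂ := !![0, -Complex.I; Complex.I, 0]

/-- Pauli Z matrix. -/
def PZ : Matrix (Fin 2) (Fin 2) ℂ := !![1, 0; 0, -1]

/-- The maximally entangled two-qubit state (|00⟩+|11⟩)/√2, as a vector. -/
def bell00 : Fin 2 × Fin 2 → ℂ := fun p => if p.1 = p.2 then ((1 / Real.sqrt 2 : ℝ) : ℂ) else 0

/-- The Bell basis vector |Ψ_ij⟩ = (I ⊗ X^i Z^j)|Ψ₀₀⟩. -/
def bell (i j : Fin 2) : Fin 2 × Fin 2 → ℂ :=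
  (((1 : Matrix (Fin 2) (Fin 2) ℂ) ⊗ₖ (PX ^ (i : ℕ) * PZ ^ (j : ℕ)))).mulVec bell00

/-- The inner product ⟨φ|M|ψ⟩. -/
def braket2 {n : Type*} [Fintype n] (φ : n → ℂ) (M : Matrix n n ℂ) (ψ : n → ℂ) : ℂ :=
  star φ ⬝ᵥ M.mulVec ψ

/-- A density matrix: positive semidefinite with unit trace. -/
def IsDensity {n : Type*} [Fintype n] (ρ : Matrix n n ℂ) : Prop :=
  ρ.PosSemidef ∧ ρ.trace = 1

/-- The Bell-diagonal twirl B(ρ). -/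
def twirl (ρ : Matrix (Fin 2 × Fin 2) (Fin 2 × Fin 2) ℂ) :
    Matrix (Fin 2 × Fin 2) (Fin 2 × Fin 2) ℂ :=
  (1 / 4 : ℂ) • (ρ + (PX ⊗ₖ PX) * ρ * (PX ⊗ₖ PX)ᴴ + (PY ⊗ₖ PY) * ρ * (PY ⊗ₖ PY)ᴴ
    + (PZ ⊗ₖ PZ) * ρ * (PZ ⊗ₖ PZ)ᴴ)

/-- The Bell projector |Ψ_ij⟩⟨Ψ_ij|. -/
def bproj (i j : Fin 2) : Matrix (Fin 2 × Fin 2) (Fin 2 × Fin 2) ℂ :=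
  vecMulVec (bell i j) (star (bell i j))

/-- Partial inner product ⟨ψ|_{A₁A₂} M |ψ⟩_{A₁A₂} of a vector ψ on the middle registers
A₁,A₂ with an operator M on registers (B₁,A₁),(A₂,B₂), giving a matrix on B₁,B₂. -/
def swapProj (ψ : Fin 2 × Fin 2 → ℂ)
    (M : Matrix ((Fin 2 × Fin 2) × (Fin 2 × Fin 2)) ((Fin 2 × Fin 2) × (Fin 2 × Fin 2)) ℂ) :
    Matrix (Fin 2 × Fin 2) (Fin 2 × Fin 2) ℂ :=
  fun p q => ∑ a₁, ∑ a₂, ∑ a₁', ∑ a₂',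
    star (ψ (a₁, a₂)) * M ((p.1, a₁), (a₂, p.2)) ((q.1, a₁'), (a₂', q.2)) * ψ (a₁', a₂')

/-- The probability of Bell-measurement outcome ij on the middle registers:
p'_ij(M) = Tr[|Ψ_ij⟩⟨Ψ_ij|_{A₁A₂} M]. -/
def swapProb (i j : Fin 2)
    (M : Matrix ((Fin 2 × Fin 2) × (Fin 2 × Fin 2)) ((Fin 2 × Fin 2) × (Fin 2 × Fin 2)) ℂ) : ℂ :=
  (swapProj (bell i j) M).trace

/-- Tr[|Ψ_ij⟩⟨Ψ_ij|_{B₁B₂} |Ψ_ij⟩⟨Ψ_ij|_{A₁A₂} M]. -/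
def swapNum (i j : Fin 2)
    (M : Matrix ((Fin 2 × Fin 2) × (Fin 2 × Fin 2)) ((Fin 2 × Fin 2) × (Fin 2 × Fin 2)) ℂ) : ℂ :=
  braket2 (bell i j) (swapProj (bell i j) M) (bell i j)

/-- The postselected end-to-end fidelity F'_ij. -/
def swapFid (i j : Fin 2)
    (M : Matrix ((Fin 2 × Fin 2) × (Fin 2 × Fin 2)) ((Fin 2 × Fin 2) × (Fin 2 × Fin 2)) ℂ) : ℂ :=
  swapNum i j M / swapProb i j M

/-- The family S_{p,F}: two-qubit states of the form p|Ψ₀₀⟩⟨Ψ₀₀| + (1−p)σ for some density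
matrix σ, with fidelity ⟨Ψ₀₀|ρ|Ψ₀₀⟩ = F. -/
def Spf (p F : ℝ) : Set (Matrix (Fin 2 × Fin 2) (Fin 2 × Fin 2) ℂ) :=
  {ρ | (∃ σ : Matrix (Fin 2 × Fin 2) (Fin 2 × Fin 2) ℂ, IsDensity σ ∧
      ρ = (p : ℂ) • bproj 0 0 + ((1 - p : ℝ) : ℂ) • σ) ∧
    braket2 (bell 0 0) ρ (bell 0 0) = (F : ℂ)}

lemma bell_zero : bell 0 0 = bell00 := by
  simp [bell, Matrix.one_kronecker_one]

lemma sqr : (1 / Real.sqrt 2 : ℝ) * (1 / Real.sqrt 2 : ℝ) = 1/2 := by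
  rw [div_mul_div_comm, one_mul, Real.mul_self_sqrt (le_of_lt two_pos)]

lemma sqc : ((1 / Real.sqrt 2 : ℝ) : ℂ) * ((1 / Real.sqrt 2 : ℝ) : ℂ) = 1/2 := by
  rw [← Complex.ofReal_mul, sqr]; norm_num

lemma invsq : ((Real.sqrt 2 : ℝ) : ℂ)⁻¹ * ((Real.sqrt 2 : ℝ) : ℂ)⁻¹ = 1/2 := by
  simpa [div_mul_div_comm] using sqc

lemma invsq' : ((Real.sqrt 2 : ℝ) : ℂ)⁻¹ ^ 2 = 1/2 := by
  rw [sq]; exact invsq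

lemma swapProj_kron (A B : Matrix (Fin 2 × Fin 2) (Fin 2 × Fin 2) ℂ) (p q : Fin 2 × Fin 2) :
    swapProj bell00 (A ⊗ₖ B) p q
      = (1/2) * ∑ a : Fin 2, ∑ a' : Fin 2, A (p.1, a) (q.1, a') * B (a, p.2) (a', q.2) := by
  simp only [swapProj, bell00, kroneckerMap_apply, Fin.sum_univ_two, Fin.isValue]
  norm_num [Complex.conj_ofReal]
  ring_nf
  rw [invsq']
  ring

lemma E_num (A B : Matrix (Fin 2 × Fin 2) (Fin 2 × Fin 2) ℂ) :
    swapNum 0 0 (A ⊗ₖ B)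
      = (1/4) * (A * (Bᵀ.submatrix Prod.swap Prod.swap)).trace := by
  rw [swapNum, bell_zero, braket2]
  simp only [Matrix.trace, Matrix.mul_apply, Matrix.diag, dotProduct, mulVec,
    Matrix.transpose_apply, Matrix.submatrix_apply, Prod.swap,
    Fintype.sum_prod_type, Fin.sum_univ_two, swapProj_kron, bell00]
  norm_num [Complex.conj_ofReal, bell00, Prod.fst_zero, Prod.snd_zero, Prod.fst_one,
    Prod.snd_one]
  ring_nf
  rw [invsq']
  ring

lemma E_den (A B : Matrix (Fin 2 × Fin 2) (Fin 2 × Fin 2) ℂ) :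
    swapProb 0 0 (A ⊗ₖ B)
      = (1/2) * ∑ a : Fin 2, ∑ a' : Fin 2, ∑ b₁ : Fin 2, ∑ b₂ : Fin 2,
          A (b₁, a) (b₁, a') * B (a, b₂) (a', b₂) := by
  rw [swapProb, bell_zero]
  simp only [Matrix.trace, Matrix.diag, Fintype.sum_prod_type, swapProj_kron]
  simp [Fin.sum_univ_two]
  ring

lemma braket_expand (B : Matrix (Fin 2 × Fin 2) (Fin 2 × Fin 2) ℂ) :
    braket2 bell00 B bell00
      = (1/2) * (B (0,0) (0,0) + B (0,0) (1,1) + B (1,1) (0,0) + B (1,1) (1,1)) := by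
  simp only [braket2, dotProduct, mulVec, Fintype.sum_prod_type, Fin.sum_univ_two, bell00]
  norm_num [Complex.conj_ofReal, bell00, Prod.fst_zero, Prod.snd_zero, Prod.fst_one,
    Prod.snd_one]
  ring_nf
  rw [invsq']
  ring

lemma bproj_apply (x y : Fin 2 × Fin 2) :
    bproj 0 0 x y = bell00 x * (starRingEnd ℂ) (bell00 y) := by
  simp [bproj, bell_zero, vecMulVec_apply, Pi.star_apply, RCLike.star_def]

lemma bproj_trace : (bproj 0 0).trace = 1 := by
  simp only [Matrix.trace, Matrix.diag, Fintype.sum_prod_type, Fin.sum_univ_two, bproj_apply,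
    bell00]
  norm_num [Complex.conj_ofReal, bell00, Prod.fst_zero, Prod.snd_zero, Prod.fst_one,
    Prod.snd_one]
  rw [invsq]; norm_num

lemma num_PB (B : Matrix (Fin 2 × Fin 2) (Fin 2 × Fin 2) ℂ) :
    swapNum 0 0 (bproj 0 0 ⊗ₖ B) = (1/4) * braket2 bell00 B bell00 := by
  rw [E_num, braket_expand]
  simp only [Matrix.trace, Matrix.diag, Matrix.mul_apply, Fintype.sum_prod_type,
    Fin.sum_univ_two, Matrix.transpose_apply, Matrix.submatrix_apply, Prod.swap, bproj_apply]
  norm_num [Complex.conj_ofReal, bell00, Prod.fst_zero, Prod.snd_zero, Prod.fst_one,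
    Prod.snd_one]
  ring_nf
  rw [invsq']
  ring

lemma num_AP (A : Matrix (Fin 2 × Fin 2) (Fin 2 × Fin 2) ℂ) :
    swapNum 0 0 (A ⊗ₖ bproj 0 0) = (1/4) * braket2 bell00 A bell00 := by
  rw [E_num, braket_expand]
  simp only [Matrix.trace, Matrix.diag, Matrix.mul_apply, Fintype.sum_prod_type,
    Fin.sum_univ_two, Matrix.transpose_apply, Matrix.submatrix_apply, Prod.swap, bproj_apply]
  norm_num [Complex.conj_ofReal, bell00, Prod.fst_zero, Prod.snd_zero, Prod.fst_one,
    Prod.snd_one]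
  ring_nf
  rw [invsq']
  ring

lemma den_PB (B : Matrix (Fin 2 × Fin 2) (Fin 2 × Fin 2) ℂ) :
    swapProb 0 0 (bproj 0 0 ⊗ₖ B) = (1/4) * B.trace := by
  rw [E_den]
  simp only [Matrix.trace, Matrix.diag, Fintype.sum_prod_type, Fin.sum_univ_two, bproj_apply]
  norm_num [Complex.conj_ofReal, bell00, Prod.fst_zero, Prod.snd_zero, Prod.fst_one,
    Prod.snd_one]
  ring_nf
  rw [invsq']
  ring

lemma den_AP (A : Matrix (Fin 2 × Fin 2) (Fin 2 × Fin 2) ℂ) :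
    swapProb 0 0 (A ⊗ₖ bproj 0 0) = (1/4) * A.trace := by
  rw [E_den]
  simp only [Matrix.trace, Matrix.diag, Fintype.sum_prod_type, Fin.sum_univ_two, bproj_apply]
  norm_num [Complex.conj_ofReal, bell00, Prod.fst_zero, Prod.snd_zero, Prod.fst_one,
    Prod.snd_one]
  ring_nf
  rw [invsq']
  ring

lemma bket : braket2 bell00 (bproj 0 0) bell00 = 1 := by
  rw [braket_expand]
  norm_num [bproj_apply, Complex.conj_ofReal, bell00, Prod.fst_zero, Prod.snd_zero,
    Prod.fst_one, Prod.snd_one]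
  ring_nf
  rw [invsq']
  norm_num

lemma num_PP : swapNum 0 0 (bproj 0 0 ⊗ₖ bproj 0 0) = 1/4 := by
  rw [num_PB, bket, mul_one]

lemma swapProj_add (ψ : Fin 2 × Fin 2 → ℂ)
    (X Y : Matrix ((Fin 2 × Fin 2) × (Fin 2 × Fin 2)) ((Fin 2 × Fin 2) × (Fin 2 × Fin 2)) ℂ) :
    swapProj ψ (X + Y) = swapProj ψ X + swapProj ψ Y := by
  ext p q
  simp [swapProj, Finset.sum_add_distrib, mul_add, add_mul]

lemma swapProj_smul (c : ℂ) (ψ : Fin 2 × Fin 2 → ℂ)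
    (X : Matrix ((Fin 2 × Fin 2) × (Fin 2 × Fin 2)) ((Fin 2 × Fin 2) × (Fin 2 × Fin 2)) ℂ) :
    swapProj ψ (c • X) = c • swapProj ψ X := by
  ext p q
  simp [swapProj, Finset.mul_sum]
  ring_nf

lemma num_add (X Y : Matrix ((Fin 2 × Fin 2) × (Fin 2 × Fin 2)) ((Fin 2 × Fin 2) × (Fin 2 × Fin 2)) ℂ) :
    swapNum 0 0 (X + Y) = swapNum 0 0 X + swapNum 0 0 Y := by
  simp [swapNum, braket2, swapProj_add, add_mulVec, dotProduct_add]

lemma num_smul (c : ℂ) (X : Matrix ((Fin 2 × Fin 2) × (Fin 2 × Fin 2)) ((Fin 2 × Fin 2) × (Fin 2 × Fin 2)) ℂ) :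
    swapNum 0 0 (c • X) = c * swapNum 0 0 X := by
  simp [swapNum, braket2, swapProj_smul, smul_mulVec, dotProduct_smul, smul_eq_mul]

lemma den_add (X Y : Matrix ((Fin 2 × Fin 2) × (Fin 2 × Fin 2)) ((Fin 2 × Fin 2) × (Fin 2 × Fin 2)) ℂ) :
    swapProb 0 0 (X + Y) = swapProb 0 0 X + swapProb 0 0 Y := by
  simp [swapProb, swapProj_add]

lemma den_smul (c : ℂ) (X : Matrix ((Fin 2 × Fin 2) × (Fin 2 × Fin 2)) ((Fin 2 × Fin 2) × (Fin 2 × Fin 2)) ℂ) :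
    swapProb 0 0 (c • X) = c * swapProb 0 0 X := by
  simp [swapProb, swapProj_smul, smul_eq_mul]

lemma cs_aux {ι : Type*} [Fintype ι] (f g : ι → ℂ) :
    Complex.normSq (∑ i, f i * g i)
      ≤ (∑ i, Complex.normSq (f i)) * (∑ i, Complex.normSq (g i)) := by
  have h1 : ‖∑ i, f i * g i‖ ≤ ∑ i, ‖f i‖ * ‖g i‖ := by
    calc ‖∑ i, f i * g i‖ = ‖∑ i, f i * g i‖ := rfl
      _ ≤ ∑ i, ‖f i * g i‖ := norm_sum_le _ _
      _ = ∑ i, ‖f i‖ * ‖g i‖ := by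
          simp
  have h2 := Finset.sum_mul_sq_le_sq_mul_sq Finset.univ
    (fun i => ‖f i‖) (fun i => ‖g i‖)
  calc Complex.normSq (∑ i, f i * g i)
      = ‖∑ i, f i * g i‖ ^ 2 := (Complex.sq_norm _).symm
    _ ≤ (∑ i, ‖f i‖ * ‖g i‖) ^ 2 := by
        apply pow_le_pow_left₀ (norm_nonneg _) h1
    _ ≤ (∑ i, ‖f i‖ ^ 2) * (∑ i, ‖g i‖ ^ 2) := h2
    _ = _ := by simp [Complex.sq_norm]

lemma dot_nsq {n : Type*} [Fintype n] (w : n → ℂ) :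
    star w ⬝ᵥ w = ((∑ j, Complex.normSq (w j) : ℝ) : ℂ) := by
  simp [dotProduct, Complex.normSq_eq_conj_mul_self]

open scoped MatrixOrder in
lemma psd_exists_ct {n : Type*} [Fintype n] [DecidableEq n] {A : Matrix n n ℂ}
    (hA : A.PosSemidef) : ∃ B : Matrix n n ℂ, A = Bᴴ * B := by
  obtain ⟨B, rfl⟩ := CStarAlgebra.nonneg_iff_eq_star_mul_self.mp hA.nonneg
  exact ⟨B, rfl⟩

lemma dot_le_trace {n : Type*} [Fintype n] [DecidableEq n] {A : Matrix n n ℂ}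
    (hA : A.PosSemidef) (v : n → ℂ) :
    (star v ⬝ᵥ A *ᵥ v).re ≤ A.trace.re * ∑ j, Complex.normSq (v j) := by
  obtain ⟨B, rfl⟩ := psd_exists_ct hA
  have key : star v ⬝ᵥ (Bᴴ * B) *ᵥ v = star (B *ᵥ v) ⬝ᵥ (B *ᵥ v) := by
    rw [← Matrix.mulVec_mulVec, Matrix.dotProduct_mulVec, Matrix.vecMul_conjTranspose,
      star_star]
  rw [key, dot_nsq, Complex.ofReal_re]
  have htr : (Bᴴ * B).trace.re = ∑ i, ∑ j, Complex.normSq (B i j) := by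
    simp only [Matrix.trace, Matrix.diag, Matrix.mul_apply, Matrix.conjTranspose_apply,
      Complex.re_sum]
    rw [Finset.sum_comm]
    congr 1; ext i; congr 1; ext j
    rw [RCLike.star_def, ← Complex.normSq_eq_conj_mul_self]; simp
  rw [htr, Finset.sum_mul]
  apply Finset.sum_le_sum
  intro i _
  have := cs_aux (fun j => B i j) v
  simpa [Matrix.mulVec, dotProduct] using this

lemma trace_mul_re_eq {n : Type*} [Fintype n] [DecidableEq n] (A : Matrix n n ℂ)
    (D : Matrix n n ℂ) :
    (A * (Dᴴ * D)).trace = ∑ j, star (fun k => star (D j k)) ⬝ᵥ A *ᵥ (fun k => star (D j k)) := by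
  rw [← Matrix.mul_assoc, Matrix.trace_mul_comm]
  simp only [Matrix.trace, Matrix.diag, Matrix.mul_apply, Matrix.conjTranspose_apply,
    dotProduct, Matrix.mulVec, Pi.star_apply, star_star]

lemma trace_mul_nonneg' {n : Type*} [Fintype n] [DecidableEq n] {A B : Matrix n n ℂ}
    (hA : A.PosSemidef) (hB : B.PosSemidef) : 0 ≤ (A * B).trace.re := by
  obtain ⟨D, rfl⟩ := psd_exists_ct hB
  rw [trace_mul_re_eq, Complex.re_sum]
  exact Finset.sum_nonneg fun j _ => hA.re_dotProduct_nonneg _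

lemma trace_mul_le' {n : Type*} [Fintype n] [DecidableEq n] {A B : Matrix n n ℂ}
    (hA : A.PosSemidef) (hB : B.PosSemidef) :
    (A * B).trace.re ≤ A.trace.re * B.trace.re := by
  obtain ⟨D, rfl⟩ := psd_exists_ct hB
  rw [trace_mul_re_eq, Complex.re_sum]
  have htr : (Dᴴ * D).trace.re = ∑ j, ∑ k, Complex.normSq (D j k) := by
    simp only [Matrix.trace, Matrix.diag, Matrix.mul_apply, Matrix.conjTranspose_apply,
      Complex.re_sum]
    rw [Finset.sum_comm]
    congr 1; ext j; congr 1; ext k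
    rw [RCLike.star_def, ← Complex.normSq_eq_conj_mul_self]; simp
  rw [htr, Finset.mul_sum]
  apply Finset.sum_le_sum
  intro j _
  have := dot_le_trace hA (fun k => star (D j k))
  simpa using this

lemma swapProj_herm (ψ : Fin 2 × Fin 2 → ℂ)
    {M : Matrix ((Fin 2 × Fin 2) × (Fin 2 × Fin 2)) ((Fin 2 × Fin 2) × (Fin 2 × Fin 2)) ℂ}
    (h : M.IsHermitian) : (swapProj ψ M).IsHermitian := by
  apply Matrix.IsHermitian.ext
  intro p q
  simp only [swapProj, star_sum, star_add, star_mul', star_star, h.apply, Fin.sum_univ_two]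
  ring

set_option maxHeartbeats 1600000 in
lemma swapProj_psd (ψ : Fin 2 × Fin 2 → ℂ)
    {M : Matrix ((Fin 2 × Fin 2) × (Fin 2 × Fin 2)) ((Fin 2 × Fin 2) × (Fin 2 × Fin 2)) ℂ}
    (hM : M.PosSemidef) : (swapProj ψ M).PosSemidef := by
  refine Matrix.PosSemidef.of_dotProduct_mulVec_nonneg (swapProj_herm ψ hM.1) fun v => ?_
  have key : star v ⬝ᵥ (swapProj ψ M) *ᵥ v
      = star (fun x : (Fin 2 × Fin 2) × (Fin 2 × Fin 2) => v (x.1.1, x.2.2) * ψ (x.1.2, x.2.1))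
        ⬝ᵥ M *ᵥ (fun x => v (x.1.1, x.2.2) * ψ (x.1.2, x.2.1)) := by
    simp only [dotProduct, Matrix.mulVec, swapProj, Fintype.sum_prod_type, Fin.sum_univ_two,
      Pi.star_apply, star_mul']
    ring
  rw [key]
  exact hM.dotProduct_mulVec_nonneg _

lemma kron_psd {A B : Matrix (Fin 2 × Fin 2) (Fin 2 × Fin 2) ℂ}
    (hA : A.PosSemidef) (hB : B.PosSemidef) : (A ⊗ₖ B).PosSemidef := by
  obtain ⟨C, rfl⟩ := psd_exists_ct hA
  obtain ⟨D, rfl⟩ := psd_exists_ct hB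
  rw [Matrix.mul_kronecker_mul]
  have h : (Cᴴ ⊗ₖ Dᴴ) = (C ⊗ₖ D)ᴴ := by
    ext x y
    simp [Matrix.kroneckerMap_apply, Matrix.conjTranspose_apply, star_mul']
  rw [h]
  exact Matrix.posSemidef_conjTranspose_mul_self _

lemma herm_trace_im {n : Type*} [Fintype n] {K : Matrix n n ℂ} (h : K.IsHermitian) :
    K.trace.im = 0 := by
  have : ∀ i, (K i i).im = 0 := fun i => by
    have := h.apply i i
    rw [RCLike.star_def, Complex.conj_eq_iff_im] at this
    exact this
  simp [Matrix.trace, Matrix.diag, Complex.im_sum, this]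

lemma bell00_normsq : ∑ j : Fin 2 × Fin 2, Complex.normSq (bell00 j) = 1 := by
  simp only [Fintype.sum_prod_type, Fin.sum_univ_two, bell00]
  norm_num [Prod.fst_zero, Prod.snd_zero, Prod.fst_one, Prod.snd_one, Complex.normSq_ofReal,
    sqr]

lemma braket2_add (φ ψ : Fin 2 × Fin 2 → ℂ) (X Y : Matrix (Fin 2 × Fin 2) (Fin 2 × Fin 2) ℂ) :
    braket2 φ (X + Y) ψ = braket2 φ X ψ + braket2 φ Y ψ := by
  simp [braket2, Matrix.add_mulVec, dotProduct_add]

lemma braket2_smul (c : ℂ) (φ ψ : Fin 2 × Fin 2 → ℂ) (X : Matrix (Fin 2 × Fin 2) (Fin 2 × Fin 2) ℂ) :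
    braket2 φ (c • X) ψ = c * braket2 φ X ψ := by
  simp [braket2, Matrix.smul_mulVec, dotProduct_smul, smul_eq_mul]

lemma swapped_trace (B : Matrix (Fin 2 × Fin 2) (Fin 2 × Fin 2) ℂ) :
    (Bᵀ.submatrix Prod.swap Prod.swap).trace = B.trace := by
  simp only [Matrix.trace, Matrix.diag, Matrix.submatrix_apply, Matrix.transpose_apply]
  exact Fintype.sum_equiv (Equiv.prodComm _ _) _ _ (fun x => rfl)

set_option maxHeartbeats 1000000 in
theorem swap_fidelity_upper_bound (p₁ F₁ p₂ F₂ : ℝ)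
    (hp₁ : 0 ≤ p₁) (hpF₁ : p₁ ≤ F₁) (hF₁ : F₁ ≤ 1)
    (hp₂ : 0 ≤ p₂) (hpF₂ : p₂ ≤ F₂) (hF₂ : F₂ ≤ 1)
    (ρ₁ ρ₂ : Matrix (Fin 2 × Fin 2) (Fin 2 × Fin 2) ℂ)
    (hρ₁ : ρ₁ ∈ Spf p₁ F₁) (hρ₂ : ρ₂ ∈ Spf p₂ F₂) :
    (swapFid 0 0 (ρ₁ ⊗ₖ ρ₂)).re ≤ 1 - p₁ * (1 - F₂) - p₂ * (1 - F₁) ∧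
    (p₁ = p₂ → F₁ = F₂ →
      (swapFid 0 0 (ρ₁ ⊗ₖ ρ₂)).re ≤ 1 - 2 * p₁ * (1 - F₁)) := by
  obtain ⟨⟨σ₁, hσ₁, hρ₁e⟩, hF₁e⟩ := hρ₁
  obtain ⟨⟨σ₂, hσ₂, hρ₂e⟩, hF₂e⟩ := hρ₂
  have hC0 : 0 ≤ 1 - p₁ * (1 - F₂) - p₂ * (1 - F₁) := by
    nlinarith [mul_nonneg (by linarith : (0:ℝ) ≤ 1 - p₁) (by linarith : (0:ℝ) ≤ 1 - p₂),
      mul_nonneg hp₁ hp₂, mul_nonneg hp₁ (by linarith : (0:ℝ) ≤ F₂ - p₂),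
      mul_nonneg hp₂ (by linarith : (0:ℝ) ≤ F₁ - p₁)]
  have hC1 : 1 - p₁ * (1 - F₂) - p₂ * (1 - F₁) ≤ 1 := by
    nlinarith [mul_nonneg hp₁ (by linarith : (0:ℝ) ≤ 1 - F₂),
      mul_nonneg hp₂ (by linarith : (0:ℝ) ≤ 1 - F₁)]
  -- F relations
  have hFrel₁ : (p₁ : ℂ) + ((1 - p₁ : ℝ) : ℂ) * braket2 bell00 σ₁ bell00 = (F₁ : ℂ) := by
    rw [← hF₁e, hρ₁e, bell_zero, braket2_add, braket2_smul, braket2_smul, bket]; ring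
  have hFrel₂ : (p₂ : ℂ) + ((1 - p₂ : ℝ) : ℂ) * braket2 bell00 σ₂ bell00 = (F₂ : ℂ) := by
    rw [← hF₂e, hρ₂e, bell_zero, braket2_add, braket2_smul, braket2_smul, bket]; ring
  -- numerator and denominator decompositions
  have hNum : swapNum 0 0 (ρ₁ ⊗ₖ ρ₂)
      = (p₁:ℂ)*(p₂:ℂ)*(1/4) + (p₁:ℂ)*((1-p₂:ℝ):ℂ)*((1/4)*braket2 bell00 σ₂ bell00)
        + ((1-p₁:ℝ):ℂ)*(p₂:ℂ)*((1/4)*braket2 bell00 σ₁ bell00)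
        + ((1-p₁:ℝ):ℂ)*((1-p₂:ℝ):ℂ)*swapNum 0 0 (σ₁ ⊗ₖ σ₂) := by
    rw [hρ₁e, hρ₂e]
    simp only [Matrix.add_kronecker, Matrix.kronecker_add, Matrix.smul_kronecker,
      Matrix.kronecker_smul, num_add, num_smul, num_PP, num_PB, num_AP, bket, smul_smul]
    ring
  have hDen : swapProb 0 0 (ρ₁ ⊗ₖ ρ₂)
      = (p₁:ℂ)*(p₂:ℂ)*(1/4) + (p₁:ℂ)*((1-p₂:ℝ):ℂ)*(1/4)
        + ((1-p₁:ℝ):ℂ)*(p₂:ℂ)*(1/4)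
        + ((1-p₁:ℝ):ℂ)*((1-p₂:ℝ):ℂ)*swapProb 0 0 (σ₁ ⊗ₖ σ₂) := by
    rw [hρ₁e, hρ₂e]
    simp only [Matrix.add_kronecker, Matrix.kronecker_add, Matrix.smul_kronecker,
      Matrix.kronecker_smul, den_add, den_smul, den_PB, den_AP, bproj_trace, hσ₁.2, hσ₂.2]
    ring
  have hNum' : swapNum 0 0 (ρ₁ ⊗ₖ ρ₂)
      = (((p₁*F₂ + p₂*F₁ - p₁*p₂)/4 : ℝ) : ℂ)
        + (((1-p₁)*(1-p₂) : ℝ) : ℂ) * swapNum 0 0 (σ₁ ⊗ₖ σ₂) := by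
    rw [hNum]; push_cast [] at hFrel₁ hFrel₂ ⊢
    linear_combination ((p₁:ℂ)/4) * hFrel₂ + ((p₂:ℂ)/4) * hFrel₁
  have hDen' : swapProb 0 0 (ρ₁ ⊗ₖ ρ₂)
      = (((p₁ + p₂ - p₁*p₂)/4 : ℝ) : ℂ)
        + (((1-p₁)*(1-p₂) : ℝ) : ℂ) * swapProb 0 0 (σ₁ ⊗ₖ σ₂) := by
    rw [hDen]; push_cast; ring
  -- PSD facts for the σ₁ ⊗ σ₂ terms
  have hkron := kron_psd hσ₁.1 hσ₂.1
  have hK := swapProj_psd bell00 hkron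
  have hnum_eq : swapNum 0 0 (σ₁ ⊗ₖ σ₂)
      = star bell00 ⬝ᵥ (swapProj bell00 (σ₁ ⊗ₖ σ₂)) *ᵥ bell00 := by
    rw [swapNum, bell_zero]; rfl
  have hden_eq : swapProb 0 0 (σ₁ ⊗ₖ σ₂) = (swapProj bell00 (σ₁ ⊗ₖ σ₂)).trace := by
    rw [swapProb, bell_zero]
  set t : ℝ := (swapNum 0 0 (σ₁ ⊗ₖ σ₂)).re with htdef
  set s : ℝ := (swapProb 0 0 (σ₁ ⊗ₖ σ₂)).re with hsdef
  clear_value t s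
  have ht0 : 0 ≤ t := by
    have := hK.re_dotProduct_nonneg bell00
    rw [htdef, hnum_eq]
    simpa using this
  have hts : t ≤ s := by
    have h := dot_le_trace hK bell00
    rw [bell00_normsq, mul_one] at h
    rw [htdef, hsdef, hnum_eq, hden_eq]
    exact h
  have hsim : (swapProb 0 0 (σ₁ ⊗ₖ σ₂)).im = 0 := by
    rw [hden_eq]; exact herm_trace_im hK.1
  have ht4 : t ≤ 1/4 := by
    have hE : (σ₂ᵀ.submatrix Prod.swap Prod.swap).PosSemidef :=
      (hσ₂.1.transpose).submatrix _
    have h1 := trace_mul_le' hσ₁.1 hE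
    rw [swapped_trace, hσ₁.2, hσ₂.2] at h1
    norm_num at h1
    rw [htdef, E_num σ₁ σ₂, show ((1:ℂ)/4) = ((1/4 : ℝ):ℂ) by norm_num,
      Complex.re_ofReal_mul]
    linarith
  -- real parts of numerator and denominator
  have hNre : (swapNum 0 0 (ρ₁ ⊗ₖ ρ₂)).re = (p₁*F₂ + p₂*F₁ - p₁*p₂)/4 + (1-p₁)*(1-p₂)*t := by
    rw [hNum', htdef]
    simp [Complex.add_re, Complex.re_ofReal_mul, Complex.ofReal_re]
  have hDre : (swapProb 0 0 (ρ₁ ⊗ₖ ρ₂)).re = (p₁ + p₂ - p₁*p₂)/4 + (1-p₁)*(1-p₂)*s := by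
    rw [hDen', hsdef]
    simp [Complex.add_re, Complex.re_ofReal_mul, Complex.ofReal_re]
  have hDim : (swapProb 0 0 (ρ₁ ⊗ₖ ρ₂)).im = 0 := by
    rw [hDen']
    simp [Complex.add_im, Complex.im_ofReal_mul, Complex.ofReal_im, hsim]
  have hδ : (0:ℝ) ≤ (1-p₁)*(1-p₂) :=
    mul_nonneg (by linarith) (by linarith)
  have main : (swapFid 0 0 (ρ₁ ⊗ₖ ρ₂)).re ≤ 1 - p₁ * (1 - F₂) - p₂ * (1 - F₁) := by
    by_cases hD : swapProb 0 0 (ρ₁ ⊗ₖ ρ₂) = 0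
    · rw [swapFid, hD, div_zero]
      simpa using hC0
    · have hDre0 : 0 ≤ (swapProb 0 0 (ρ₁ ⊗ₖ ρ₂)).re := by
        rw [hDre]
        have : 0 ≤ (1-p₁)*(1-p₂)*s := mul_nonneg hδ (le_trans ht0 hts)
        nlinarith [mul_nonneg hp₁ hp₂]
      have hDrepos : 0 < (swapProb 0 0 (ρ₁ ⊗ₖ ρ₂)).re := by
        rcases lt_or_eq_of_le hDre0 with h | h
        · exact h
        · exact absurd (Complex.ext h.symm hDim) hD
      have hfid : (swapFid 0 0 (ρ₁ ⊗ₖ ρ₂)).re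
          = (swapNum 0 0 (ρ₁ ⊗ₖ ρ₂)).re / (swapProb 0 0 (ρ₁ ⊗ₖ ρ₂)).re := by
        rw [swapFid, Complex.div_re, hDim, Complex.normSq_apply, hDim]
        field_simp
        ring
      rw [hfid, div_le_iff₀ hDrepos, hNre, hDre]
      have key : (1 - p₁ * (1 - F₂) - p₂ * (1 - F₁)) * ((p₁ + p₂ - p₁*p₂)/4 + (1-p₁)*(1-p₂)*s)
          - ((p₁*F₂ + p₂*F₁ - p₁*p₂)/4 + (1-p₁)*(1-p₂)*t)
          = (1 - p₁ * (1 - F₂) - p₂ * (1 - F₁)) * ((1-p₁)*(1-p₂)) * (s - t)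
            + ((1-p₁)*(1-p₂)) * (1 - (1 - p₁ * (1 - F₂) - p₂ * (1 - F₁))) * (1/4 - t) := by
        ring
      have h1 : 0 ≤ (1 - p₁ * (1 - F₂) - p₂ * (1 - F₁)) * ((1-p₁)*(1-p₂)) * (s - t) :=
        mul_nonneg (mul_nonneg hC0 hδ) (by linarith)
      have h2 : 0 ≤ ((1-p₁)*(1-p₂)) * (1 - (1 - p₁ * (1 - F₂) - p₂ * (1 - F₁))) * (1/4 - t) :=
        mul_nonneg (mul_nonneg hδ (by linarith)) (by linarith)
      linarith [key, h1, h2]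
  refine ⟨main, fun h1 h2 => ?_⟩
  subst h1; subst h2
  linarith [main]
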